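/- Assume the variables (U_s)_{s∈S} are conditionally independent given Y. Then the set function F(S) = I(U_S; Y) on subsets S of a finite ground set is submodular: for S ⊆ T and element u ∉ T, F(S ∪ {u}) − F(S) ≥ F(T ∪ {u}) − F(T). -/

import Mathlib

open Finset

/-- Probability mass of the event `X = x` under a pmf `p` on a finite sample space. -/
noncomputable def pmassOf {Ω : Type*} [Fintype Ω] {γ : Type*} [DecidableEq γ]
    (p : Ω → ℝ) (X : Ω → γ) (x : γ) : ℝ :=
  ∑ ω, if X ω = x then p ω else 0

/-- Shannon entropy of a discrete random variable. -/
noncomputable def entOf {Ω : Type*} [Fintype Ω] {γ : Type*} [Fintype γ] [DecidableEq γ]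
    (p : Ω → ℝ) (X : Ω → γ) : ℝ :=
  -∑ x, pmassOf p X x * Real.log (pmassOf p X x)

/-- Conditional Shannon entropy H(X|Y) = H(X,Y) - H(Y). -/
noncomputable def condEntOf {Ω : Type*} [Fintype Ω] {γ δ : Type*}
    [Fintype γ] [DecidableEq γ] [Fintype δ] [DecidableEq δ]
    (p : Ω → ℝ) (X : Ω → γ) (Y : Ω → δ) : ℝ :=
  entOf p (fun ω => (X ω, Y ω)) - entOf p Y

/-- Mutual information I(X;Y) = H(X) + H(Y) - H(X,Y). -/
noncomputable def miOf {Ω : Type*} [Fintype Ω] {γ δ : Type*}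
    [Fintype γ] [DecidableEq γ] [Fintype δ] [DecidableEq δ]
    (p : Ω → ℝ) (X : Ω → γ) (Y : Ω → δ) : ℝ :=
  entOf p X + entOf p Y - entOf p (fun ω => (X ω, Y ω))

/-- Conditional mutual information I(X;Y|Z) = H(X|Z) + H(Y|Z) - H(X,Y|Z). -/
noncomputable def cmiOf {Ω : Type*} [Fintype Ω] {γ δ ε : Type*}
    [Fintype γ] [DecidableEq γ] [Fintype δ] [DecidableEq δ] [Fintype ε] [DecidableEq ε]
    (p : Ω → ℝ) (X : Ω → γ) (Y : Ω → δ) (Z : Ω → ε) : ℝ :=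
  condEntOf p X Z + condEntOf p Y Z - condEntOf p (fun ω => (X ω, Y ω)) Z

/-- Joint random variable of a finite family. -/
def jointFin {Ω : Type*} {γ : Type*} {k : ℕ} (U : Fin k → Ω → γ) : Ω → (Fin k → γ) :=
  fun ω i => U i ω

/-- Total correlation (multi-information) 𝓘(U₁,...,U_k) = ∑ H(Uᵢ) − H(U₁,...,U_k). -/
noncomputable def totalCorrFin {Ω : Type*} [Fintype Ω] {γ : Type*} [Fintype γ] [DecidableEq γ]
    {k : ℕ} (p : Ω → ℝ) (U : Fin k → Ω → γ) : ℝ :=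
  (∑ i, entOf p (U i)) - entOf p (jointFin U)

/-- Conditional total correlation 𝓘(U₁,...,U_k | Y) = ∑ H(Uᵢ|Y) − H(U₁,...,U_k|Y). -/
noncomputable def condTotalCorrFin {Ω : Type*} [Fintype Ω] {γ δ : Type*}
    [Fintype γ] [DecidableEq γ] [Fintype δ] [DecidableEq δ]
    {k : ℕ} (p : Ω → ℝ) (U : Fin k → Ω → γ) (Y : Ω → δ) : ℝ :=
  (∑ i, condEntOf p (U i) Y) - condEntOf p (jointFin U) Y

/-- Joint random variable of a subfamily indexed by a finite set. -/
def jointOn {Ω γ ι : Type*} (U : ι → Ω → γ) (S : Finset ι) : Ω → (S → γ) :=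
  fun ω i => U i.1 ω

/-- Total correlation of the subfamily indexed by `S`. -/
noncomputable def totalCorrOn {Ω γ ι : Type*} [Fintype Ω] [DecidableEq ι] [Fintype γ] [DecidableEq γ]
    (p : Ω → ℝ) (U : ι → Ω → γ) (S : Finset ι) : ℝ :=
  (∑ i ∈ S, entOf p (U i)) - entOf p (jointOn U S)

/-- Conditional total correlation of the subfamily indexed by `S`, given `Y`. -/
noncomputable def condTotalCorrOn {Ω γ δ ι : Type*} [Fintype Ω] [DecidableEq ι]
    [Fintype γ] [DecidableEq γ] [Fintype δ] [DecidableEq δ]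
    (p : Ω → ℝ) (U : ι → Ω → γ) (Y : Ω → δ) (S : Finset ι) : ℝ :=
  (∑ i ∈ S, condEntOf p (U i) Y) - condEntOf p (jointOn U S) Y

section auxlemmas

private lemma logSum_aux {κ : Type*} (s : Finset κ) (a b : κ → ℝ)
    (ha : ∀ i ∈ s, 0 ≤ a i) (hab : ∀ i ∈ s, a i ≤ b i) :
    (∑ i ∈ s, a i) * Real.log ((∑ i ∈ s, a i) / (∑ i ∈ s, b i)) ≤
      ∑ i ∈ s, a i * Real.log (a i / b i) := by
  set A := ∑ i ∈ s, a i with hA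
  set B := ∑ i ∈ s, b i with hB
  have hA0 : 0 ≤ A := Finset.sum_nonneg ha
  have hAB : A ≤ B := Finset.sum_le_sum hab
  rcases eq_or_lt_of_le hA0 with h0 | hApos
  · have hz : ∀ i ∈ s, a i = 0 :=
      (Finset.sum_eq_zero_iff_of_nonneg ha).1 h0.symm
    have : ∑ i ∈ s, a i * Real.log (a i / b i) = 0 :=
      Finset.sum_eq_zero fun i hi => by rw [hz i hi]; ring
    rw [this, ← h0]; simp
  · set t := s.filter (fun i => 0 < a i) with ht
    have hts : t ⊆ s := Finset.filter_subset _ _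
    have hat : ∑ i ∈ t, a i = A := by
      rw [hA, ← Finset.sum_filter_add_sum_filter_not s (fun i => 0 < a i) a]
      have h0' : ∑ i ∈ s.filter (fun i => ¬ 0 < a i), a i = 0 :=
        Finset.sum_eq_zero fun i hi => by
          have hi' := Finset.mem_filter.1 hi
          exact le_antisymm (not_lt.1 hi'.2) (ha i hi'.1)
      rw [h0']; ring
    have hapos : ∀ i ∈ t, 0 < a i := fun i hi => (Finset.mem_filter.1 hi).2
    have hbpos : ∀ i ∈ t, 0 < b i := fun i hi =>
      lt_of_lt_of_le (hapos i hi) (hab i (hts hi))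
    have hrhs : ∑ i ∈ s, a i * Real.log (a i / b i) = ∑ i ∈ t, a i * Real.log (a i / b i) := by
      rw [← Finset.sum_filter_add_sum_filter_not s (fun i => 0 < a i)]
      have h0' : ∑ i ∈ s.filter (fun i => ¬ 0 < a i), a i * Real.log (a i / b i) = 0 :=
        Finset.sum_eq_zero fun i hi => by
          have hi' := Finset.mem_filter.1 hi
          have : a i = 0 := le_antisymm (not_lt.1 hi'.2) (ha i hi'.1)
          rw [this]; ring
      rw [h0']; ring
    have hjensen : ∑ i ∈ t, (a i / A) • Real.log (b i / a i) ≤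
        Real.log (∑ i ∈ t, (a i / A) • (b i / a i)) := by
      apply ConcaveOn.le_map_sum strictConcaveOn_log_Ioi.concaveOn
      · intro i hi; exact div_nonneg (hapos i hi).le hA0
      · rw [← Finset.sum_div, hat, div_self (ne_of_gt hApos)]
      · intro i hi
        exact Set.mem_Ioi.2 (div_pos (hbpos i hi) (hapos i hi))
    set B' := ∑ i ∈ t, b i with hB'
    have hsum : ∑ i ∈ t, (a i / A) • (b i / a i) = B' / A := by
      rw [hB', Finset.sum_div]
      apply Finset.sum_congr rfl
      intro i hi
      have hai := ne_of_gt (hapos i hi)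
      rw [smul_eq_mul]
      field_simp
    have hB'A : A ≤ B' := by
      rw [← hat]; exact Finset.sum_le_sum fun i hi => hab i (hts hi)
    have hlog : Real.log (B' / A) ≤ Real.log (B / A) := by
      have hB'B : B' ≤ B := by
        apply Finset.sum_le_sum_of_subset_of_nonneg hts
        intro i hi _; exact le_trans (ha i hi) (hab i hi)
      apply Real.log_le_log (div_pos (lt_of_lt_of_le hApos hB'A) hApos)
      gcongr
    have hmul : ∑ i ∈ t, a i * Real.log (b i / a i) ≤ A * Real.log (B / A) := by
      have h1 : (∑ i ∈ t, a i * Real.log (b i / a i)) / A ≤ Real.log (B / A) := by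
        calc (∑ i ∈ t, a i * Real.log (b i / a i)) / A
            = ∑ i ∈ t, (a i / A) • Real.log (b i / a i) := by
              rw [Finset.sum_div]
              apply Finset.sum_congr rfl
              intro i hi; rw [smul_eq_mul, div_mul_eq_mul_div]
          _ ≤ Real.log (∑ i ∈ t, (a i / A) • (b i / a i)) := hjensen
          _ = Real.log (B' / A) := by rw [hsum]
          _ ≤ Real.log (B / A) := hlog
      calc ∑ i ∈ t, a i * Real.log (b i / a i)
          = ((∑ i ∈ t, a i * Real.log (b i / a i)) / A) * A := by
            field_simp
        _ ≤ Real.log (B / A) * A := by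
            exact mul_le_mul_of_nonneg_right h1 hA0
        _ = A * Real.log (B / A) := mul_comm _ _
    rw [hrhs]
    calc A * Real.log (A / B) = -(A * Real.log (B / A)) := by
          rw [show A / B = (B / A)⁻¹ from (inv_div _ _).symm, Real.log_inv]; ring
      _ ≤ -(∑ i ∈ t, a i * Real.log (b i / a i)) := neg_le_neg hmul
      _ = ∑ i ∈ t, a i * Real.log (a i / b i) := by
          rw [← Finset.sum_neg_distrib]
          apply Finset.sum_congr rfl
          intro i hi
          rw [show a i / b i = (b i / a i)⁻¹ by rw [inv_div], Real.log_inv]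
          ring

section aux

variable {Ω : Type*} [Fintype Ω] {γ δ ε : Type*}
  [Fintype γ] [DecidableEq γ] [Fintype δ] [DecidableEq δ] [Fintype ε] [DecidableEq ε]
  {p : Ω → ℝ}

private lemma pmass_nonneg (hp : ∀ ω, 0 ≤ p ω) (X : Ω → γ) (x : γ) :
    0 ≤ pmassOf p X x :=
  Finset.sum_nonneg fun ω _ => by by_cases h : X ω = x <;> simp [h, hp ω]

private lemma pmass_pair_le (hp : ∀ ω, 0 ≤ p ω) (X : Ω → γ) (W : Ω → δ) (x : γ) (w : δ) :
    pmassOf p (fun ω => (X ω, W ω)) (x, w) ≤ pmassOf p W w := by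
  apply Finset.sum_le_sum
  intro ω _
  dsimp only
  split_ifs with h1 h2 h2
  · exact le_rfl
  · exact absurd (congrArg Prod.snd h1) h2
  · exact hp ω
  · exact le_rfl

private lemma pmass_marginal (X : Ω → γ) (W : Ω → δ) (w : δ) :
    ∑ x, pmassOf p (fun ω => (X ω, W ω)) (x, w) = pmassOf p W w := by
  unfold pmassOf
  rw [Finset.sum_comm]
  apply Finset.sum_congr rfl
  intro ω _
  rcases eq_or_ne (W ω) w with h | h
  · rw [Finset.sum_eq_single (X ω)]
    · simp [h]
    · intro x _ hx
      simp [Prod.ext_iff, Ne.symm hx]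
    · intro hx; exact absurd (Finset.mem_univ _) hx
  · simp [Prod.ext_iff, h]

private lemma pmass_fiber (X : Ω → γ) (W : Ω → δ) (f : δ → ε) (x : γ) (z : ε) :
    pmassOf p (fun ω => (X ω, f (W ω))) (x, z) =
      ∑ w ∈ univ.filter (fun w => f w = z), pmassOf p (fun ω => (X ω, W ω)) (x, w) := by
  unfold pmassOf
  rw [Finset.sum_comm]
  apply Finset.sum_congr rfl
  intro ω _
  by_cases hz : f (W ω) = z
  · rw [Finset.sum_eq_single (W ω)]
    · simp [hz, Prod.ext_iff]
    · intro w _ hw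
      simp [Prod.ext_iff, Ne.symm hw]
    · intro hw
      exact absurd (Finset.mem_filter.2 ⟨Finset.mem_univ (W ω), hz⟩) hw
  · rw [Finset.sum_eq_zero]
    · simp [Prod.ext_iff, hz]
    · intro w hw
      have hfw : f w = z := (Finset.mem_filter.1 hw).2
      have : W ω ≠ w := fun h => hz (h ▸ hfw)
      simp [Prod.ext_iff, this]

private lemma pmass_fiber' (W : Ω → δ) (f : δ → ε) (z : ε) :
    pmassOf p (fun ω => f (W ω)) z =
      ∑ w ∈ univ.filter (fun w => f w = z), pmassOf p W w := by
  unfold pmassOf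
  rw [Finset.sum_comm]
  apply Finset.sum_congr rfl
  intro ω _
  by_cases hz : f (W ω) = z
  · rw [Finset.sum_eq_single (W ω)]
    · simp [hz]
    · intro w _ hw; simp [Ne.symm hw]
    · intro hw
      exact absurd (Finset.mem_filter.2 ⟨Finset.mem_univ (W ω), hz⟩) hw
  · rw [Finset.sum_eq_zero]
    · simp [hz]
    · intro w hw
      have hfw : f w = z := (Finset.mem_filter.1 hw).2
      have : W ω ≠ w := fun h => hz (h ▸ hfw)
      simp [this]

private lemma entOf_comp (p : Ω → ℝ) (X : Ω → γ) (f : γ → δ) (hf : Function.Injective f) :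
    entOf p (fun ω => f (X ω)) = entOf p X := by
  unfold entOf
  congr 1
  have hkey : ∀ x : γ, pmassOf p (fun ω => f (X ω)) (f x) = pmassOf p X x := by
    intro x; unfold pmassOf
    apply Finset.sum_congr rfl
    intro ω _
    simp [hf.eq_iff]
  have hzero : ∀ y : δ, y ∉ Finset.image f univ → pmassOf p (fun ω => f (X ω)) y = 0 := by
    intro y hy
    apply Finset.sum_eq_zero
    intro ω _
    have : f (X ω) ≠ y := fun h => hy (h ▸ Finset.mem_image_of_mem f (Finset.mem_univ _))
    simp [this]
  rw [← Finset.sum_subset (Finset.subset_univ (Finset.image f univ))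
      (fun y _ hy => by rw [hzero y hy]; simp),
    Finset.sum_image (fun x _ y _ h => hf h)]
  apply Finset.sum_congr rfl
  intro x _
  rw [hkey]

private lemma condEnt_eq (hp : ∀ ω, 0 ≤ p ω) (X : Ω → γ) (W : Ω → δ) :
    condEntOf p X W =
      -∑ x, ∑ w, pmassOf p (fun ω => (X ω, W ω)) (x, w) *
        Real.log (pmassOf p (fun ω => (X ω, W ω)) (x, w) / pmassOf p W w) := by
  have hterm : ∀ x w, pmassOf p (fun ω => (X ω, W ω)) (x, w) *
      Real.log (pmassOf p (fun ω => (X ω, W ω)) (x, w) / pmassOf p W w) =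
      pmassOf p (fun ω => (X ω, W ω)) (x, w) *
        Real.log (pmassOf p (fun ω => (X ω, W ω)) (x, w)) -
      pmassOf p (fun ω => (X ω, W ω)) (x, w) * Real.log (pmassOf p W w) := by
    intro x w
    rcases eq_or_lt_of_le (pmass_nonneg hp (fun ω => (X ω, W ω)) (x, w)) with h0 | hpos
    · rw [← h0]; ring
    · have hr : 0 < pmassOf p W w := lt_of_lt_of_le hpos (pmass_pair_le hp X W x w)
      rw [Real.log_div (ne_of_gt hpos) (ne_of_gt hr)]
      ring
  have h2 : ∀ w : δ, ∑ x, pmassOf p (fun ω => (X ω, W ω)) (x, w) * Real.log (pmassOf p W w)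
      = pmassOf p W w * Real.log (pmassOf p W w) := by
    intro w
    rw [← Finset.sum_mul, pmass_marginal]
  calc condEntOf p X W
      = -∑ q : γ × δ, pmassOf p (fun ω => (X ω, W ω)) q *
          Real.log (pmassOf p (fun ω => (X ω, W ω)) q)
        + ∑ w, pmassOf p W w * Real.log (pmassOf p W w) := by
        unfold condEntOf entOf; ring
    _ = -∑ x, ∑ w, pmassOf p (fun ω => (X ω, W ω)) (x, w) *
          Real.log (pmassOf p (fun ω => (X ω, W ω)) (x, w))
        + ∑ x, ∑ w, pmassOf p (fun ω => (X ω, W ω)) (x, w) * Real.log (pmassOf p W w) := by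
        rw [Fintype.sum_prod_type]
        congr 1
        rw [Finset.sum_comm]
        apply Finset.sum_congr rfl
        intro w _
        rw [h2 w]
    _ = _ := by
        have h3 : ∑ x, ∑ w, pmassOf p (fun ω => (X ω, W ω)) (x, w) *
            Real.log (pmassOf p (fun ω => (X ω, W ω)) (x, w) / pmassOf p W w)
            = (∑ x, ∑ w, pmassOf p (fun ω => (X ω, W ω)) (x, w) *
                Real.log (pmassOf p (fun ω => (X ω, W ω)) (x, w)))
              - ∑ x, ∑ w, pmassOf p (fun ω => (X ω, W ω)) (x, w) *
                  Real.log (pmassOf p W w) := by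
          rw [← Finset.sum_sub_distrib]
          apply Finset.sum_congr rfl
          intro x _
          rw [← Finset.sum_sub_distrib]
          exact Finset.sum_congr rfl fun w _ => hterm x w
        rw [h3]
        ring

private lemma condEnt_comp_le (hp : ∀ ω, 0 ≤ p ω) (X : Ω → γ) (W : Ω → δ) (f : δ → ε) :
    condEntOf p X W ≤ condEntOf p X (fun ω => f (W ω)) := by
  rw [condEnt_eq hp X W, condEnt_eq hp X (fun ω => f (W ω))]
  apply neg_le_neg
  apply Finset.sum_le_sum
  intro x _
  rw [← Finset.sum_fiberwise univ f
    (fun w => pmassOf p (fun ω => (X ω, W ω)) (x, w) *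
      Real.log (pmassOf p (fun ω => (X ω, W ω)) (x, w) / pmassOf p W w))]
  apply Finset.sum_le_sum
  intro z _
  rw [pmass_fiber X W f x z, pmass_fiber' W f z]
  exact logSum_aux _ _ _
    (fun w _ => pmass_nonneg hp _ _)
    (fun w _ => pmass_pair_le hp X W x w)

end aux

section mainaux
variable {Ω α β ι : Type*} [Fintype Ω] [Fintype ι] [DecidableEq ι]
  [Fintype α] [DecidableEq α] [Fintype β] [DecidableEq β]

private def splitFun (u : ι) (R : Finset ι) (g : ↥(insert u R) → α) :
    α × (↥R → α) :=
  (g (⟨u, Finset.mem_insert_self u R⟩ : ↥(insert u R)),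
    fun i => g (⟨i.1, Finset.mem_insert_of_mem i.2⟩ : ↥(insert u R)))

private lemma splitFun_inj (u : ι) (R : Finset ι) :
    Function.Injective (splitFun (α := α) u R) := by
  intro g1 g2 h
  have h1 := congrArg Prod.fst h
  have h2 := congrArg Prod.snd h
  funext x
  obtain ⟨x, hx⟩ := x
  rcases Finset.mem_insert.1 hx with rfl | hxR
  · exact h1
  · exact congrFun h2 ⟨x, hxR⟩

private def splitFun2 (u : ι) (R : Finset ι)
    (z : (↥(insert u R) → α) × β) : α × (β × (↥R → α)) :=
  ((splitFun u R z.1).1, (z.2, (splitFun u R z.1).2))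

private lemma splitFun2_inj (u : ι) (R : Finset ι) :
    Function.Injective (splitFun2 (α := α) (β := β) u R) := by
  intro z1 z2 h
  have ha := congrArg (fun q : α × (β × (↥R → α)) => q.1) h
  have hb := congrArg (fun q : α × (β × (↥R → α)) => q.2.1) h
  have hc := congrArg (fun q : α × (β × (↥R → α)) => q.2.2) h
  have h1 : z1.1 = z2.1 := splitFun_inj u R (Prod.ext ha hc)
  exact Prod.ext h1 hb

private lemma mi_insert (p : Ω → ℝ) (U : ι → Ω → α) (Y : Ω → β) (u : ι) (R : Finset ι) :
    miOf p (jointOn U (insert u R)) Y - miOf p (jointOn U R) Y =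
      condEntOf p (U u) (jointOn U R) -
        condEntOf p (U u) (fun ω => (Y ω, jointOn U R ω)) := by
  have e1 : entOf p (fun ω => (U u ω, jointOn U R ω)) =
      entOf p (jointOn U (insert u R)) :=
    entOf_comp p (jointOn U (insert u R)) (splitFun u R) (splitFun_inj u R)
  have e2 : entOf p (fun ω => (U u ω, (Y ω, jointOn U R ω))) =
      entOf p (fun ω => (jointOn U (insert u R) ω, Y ω)) :=
    entOf_comp p (fun ω => (jointOn U (insert u R) ω, Y ω)) (splitFun2 u R)
      (splitFun2_inj u R)
  have e3 : entOf p (fun ω => (jointOn U R ω, Y ω)) =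
      entOf p (fun ω => (Y ω, jointOn U R ω)) :=
    entOf_comp p (fun ω => (Y ω, jointOn U R ω)) Prod.swap Prod.swap_injective
  unfold miOf condEntOf
  rw [← e1, ← e2, ← e3]
  ring

end mainaux
end auxlemmas

/-- Under conditional independence of the variables given Y, the set function
S ↦ I(U_S; Y) is submodular. -/
theorem jointMI_submodular {Ω α β ι : Type*} [Fintype Ω] [Fintype ι] [DecidableEq ι]
    [Fintype α] [DecidableEq α] [Fintype β] [DecidableEq β]
    (p : Ω → ℝ) (hp : ∀ ω, 0 ≤ p ω) (hp1 : ∑ ω, p ω = 1)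
    (U : ι → Ω → α) (Y : Ω → β)
    (hci : ∀ (S : Finset ι) (u : ι), u ∉ S →
      condEntOf p (U u) (fun ω => (Y ω, jointOn U S ω)) = condEntOf p (U u) Y) :
    ∀ (S T : Finset ι) (u : ι), S ⊆ T → u ∉ T →
      miOf p (jointOn U (insert u T)) Y - miOf p (jointOn U T) Y ≤
        miOf p (jointOn U (insert u S)) Y - miOf p (jointOn U S) Y := by
  intro S T u hST huT
  have huS : u ∉ S := fun h => huT (hST h)
  rw [mi_insert p U Y u S, mi_insert p U Y u T, hci S u huS, hci T u huT]
  apply sub_le_sub_right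
  have h := condEnt_comp_le hp (U u) (jointOn U T)
    (fun (g : ↥T → α) (i : ↥S) => g ⟨i.1, hST i.2⟩)
  have he : (fun ω => (fun (g : ↥T → α) (i : ↥S) => g ⟨i.1, hST i.2⟩) (jointOn U T ω))
      = jointOn U S := rfl
  rw [he] at h
  exact h
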